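/- In the Bayesian persuasion problem with i.i.d. action payoffs, there exists a direct signaling scheme that is incentive compatible, achieves the maximum expected sender utility among all incentive-compatible direct schemes, and is symmetric, i.e., has an s-signature (x, y). -/

import Mathlib

open Finset

namespace IID

variable {n m : ℕ}

/-- the i.i.d. prior on states `θ ∈ [m]^n`: `λ(θ) = ∏ i, q (θ i)` -/
def prior (q : Fin m → ℝ) (θ : Fin n → Fin m) : ℝ := ∏ i, q (θ i)

/-- a direct signaling scheme: each state gets a probability distribution over the
`n` signals, signal `i` recommending action `i` -/
def IsScheme (φ : (Fin n → Fin m) → Fin n → ℝ) : Prop :=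
  (∀ θ i, 0 ≤ φ θ i) ∧ ∀ θ, ∑ i, φ θ i = 1

/-- incentive compatibility: conditioned on each signal `i`, the recommended action `i`
maximizes the receiver's (type-determined) expected payoff -/
def IC (q ρ : Fin m → ℝ) (φ : (Fin n → Fin m) → Fin n → ℝ) : Prop :=
  ∀ i j : Fin n,
    ∑ θ : Fin n → Fin m, prior q θ * φ θ i * ρ (θ j) ≤
      ∑ θ : Fin n → Fin m, prior q θ * φ θ i * ρ (θ i)

/-- expected sender utility when the receiver follows the recommendations -/
def senderUtil (q ξ : Fin m → ℝ) (φ : (Fin n → Fin m) → Fin n → ℝ) : ℝ :=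
  ∑ θ : Fin n → Fin m, ∑ i, prior q θ * φ θ i * ξ (θ i)

/-- the signature of a scheme: `signature q φ i j k` is the joint probability that the
scheme sends signal `i` and action `j` has type `k` (entry `M^{σ_i}_{jk}`) -/
def signature (q : Fin m → ℝ) (φ : (Fin n → Fin m) → Fin n → ℝ)
    (i j : Fin n) (k : Fin m) : ℝ :=
  ∑ θ : Fin n → Fin m, if θ j = k then prior q θ * φ θ i else 0

end IID

open IID

namespace IIDProof
open IID

variable {n m : ℕ}

/-- moment functional -/
noncomputable def mom (q : Fin m → ℝ) (φ : (Fin n → Fin m) → Fin n → ℝ)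
    (i j : Fin n) (F : Fin m → ℝ) : ℝ :=
  ∑ θ : Fin n → Fin m, prior q θ * φ θ i * F (θ j)

/-- symmetrization of a scheme over permutations of actions -/
noncomputable def sym (φ : (Fin n → Fin m) → Fin n → ℝ) : (Fin n → Fin m) → Fin n → ℝ :=
  fun θ i => (∑ π : Equiv.Perm (Fin n), φ (θ ∘ π) (π⁻¹ i)) /
    (Fintype.card (Equiv.Perm (Fin n)) : ℝ)

lemma cardPerm_pos : (0 : ℝ) < (Fintype.card (Equiv.Perm (Fin n)) : ℝ) := by
  exact_mod_cast Fintype.card_pos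

lemma prior_comp (q : Fin m → ℝ) (π : Equiv.Perm (Fin n)) (θ : Fin n → Fin m) :
    prior q (θ ∘ π) = prior q θ :=
  Equiv.prod_comp π (fun i => q (θ i))

lemma sum_comp_perm (π : Equiv.Perm (Fin n)) (f : (Fin n → Fin m) → ℝ) :
    ∑ θ : Fin n → Fin m, f (θ ∘ π) = ∑ θ : Fin n → Fin m, f θ := by
  refine Fintype.sum_bijective (fun θ => θ ∘ π) ⟨?_, ?_⟩ _ _ (fun θ => rfl)
  · intro a b h
    funext x
    have := congrFun h (π.symm x)
    simpa using this
  · intro b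
    exact ⟨b ∘ π.symm, by funext x; simp⟩

lemma mom_sym (q : Fin m → ℝ) (φ : (Fin n → Fin m) → Fin n → ℝ) (i j : Fin n)
    (F : Fin m → ℝ) :
    mom q (sym φ) i j F = (∑ π : Equiv.Perm (Fin n), mom q φ (π⁻¹ i) (π⁻¹ j) F) /
      (Fintype.card (Equiv.Perm (Fin n)) : ℝ) := by
  unfold mom sym
  simp only [div_eq_mul_inv, Finset.sum_mul, Finset.mul_sum]
  rw [Finset.sum_comm]
  refine Finset.sum_congr rfl fun π _ => ?_
  rw [← sum_comp_perm π (fun θ => prior q θ * φ θ (π⁻¹ i) * F (θ (π⁻¹ j)) *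
    ((Fintype.card (Equiv.Perm (Fin n)) : ℝ))⁻¹)]
  refine Finset.sum_congr rfl fun θ _ => ?_
  simp only [Function.comp_apply, prior_comp, Equiv.Perm.inv_def, Equiv.apply_symm_apply]
  ring

lemma perm_sum_diag (g : Fin n → ℝ) (i i' : Fin n) :
    ∑ π : Equiv.Perm (Fin n), g (π⁻¹ i) = ∑ π : Equiv.Perm (Fin n), g (π⁻¹ i') := by
  rw [← Equiv.sum_comp (Equiv.mulLeft (Equiv.swap i i')) (fun π => g (π⁻¹ i))]
  refine Finset.sum_congr rfl fun π _ => ?_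
  simp [mul_inv_rev, Equiv.Perm.mul_apply]

lemma perm_sum_pair (g : Fin n → Fin n → ℝ) {i j i' j' : Fin n} (hij : j ≠ i)
    (hij' : j' ≠ i') :
    ∑ π : Equiv.Perm (Fin n), g (π⁻¹ i) (π⁻¹ j) =
      ∑ π : Equiv.Perm (Fin n), g (π⁻¹ i') (π⁻¹ j') := by
  set τ : Equiv.Perm (Fin n) := Equiv.swap i' i with hτ
  set σ : Equiv.Perm (Fin n) := Equiv.swap (τ j') j * τ with hσ
  have hτi' : τ i' = i := Equiv.swap_apply_left i' i
  have hne1 : i ≠ τ j' := by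
    intro h
    apply hij'
    have h2 : τ i = j' := by rw [h]; exact Equiv.swap_apply_self i' i j'
    exact (((Equiv.swap_apply_right i' i).symm.trans h2).symm : j' = i')
  have hσi' : σ i' = i := by
    rw [hσ]
    simp only [Equiv.Perm.mul_apply, hτi']
    exact Equiv.swap_apply_of_ne_of_ne hne1 hij.symm
  have hσj' : σ j' = j := by
    rw [hσ]
    simp only [Equiv.Perm.mul_apply]
    exact Equiv.swap_apply_left _ _
  have hinvi : σ⁻¹ i = i' := by rw [← hσi']; simp
  have hinvj : σ⁻¹ j = j' := by rw [← hσj']; simp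
  rw [← Equiv.sum_comp (Equiv.mulLeft σ) (fun π => g (π⁻¹ i) (π⁻¹ j))]
  refine Finset.sum_congr rfl fun π _ => ?_
  simp [mul_inv_rev, Equiv.Perm.mul_apply, hinvi, hinvj]

lemma IC_iff (q ρ : Fin m → ℝ) (φ : (Fin n → Fin m) → Fin n → ℝ) :
    IC q ρ φ ↔ ∀ i j : Fin n, mom q φ i j ρ ≤ mom q φ i i ρ := Iff.rfl

lemma senderUtil_eq (q ξ : Fin m → ℝ) (φ : (Fin n → Fin m) → Fin n → ℝ) :
    senderUtil q ξ φ = ∑ i, mom q φ i i ξ := by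
  unfold senderUtil mom
  exact Finset.sum_comm

lemma signature_eq (q : Fin m → ℝ) (φ : (Fin n → Fin m) → Fin n → ℝ)
    (i j : Fin n) (k : Fin m) :
    signature q φ i j k = mom q φ i j (fun l => if l = k then 1 else 0) := by
  unfold signature mom
  refine Finset.sum_congr rfl fun θ _ => ?_
  by_cases h : θ j = k <;> simp [h]

lemma sym_isScheme {φ : (Fin n → Fin m) → Fin n → ℝ} (hφ : IsScheme φ) :
    IsScheme (sym φ) := by
  constructor
  · intro θ i
    apply div_nonneg
    · exact Finset.sum_nonneg fun π _ => hφ.1 _ _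
    · positivity
  · intro θ
    unfold sym
    rw [← Finset.sum_div]
    rw [Finset.sum_comm]
    have : ∀ π : Equiv.Perm (Fin n), ∑ i, φ (θ ∘ π) (π⁻¹ i) = 1 := by
      intro π
      rw [Equiv.sum_comp (π⁻¹ : Equiv.Perm (Fin n)) (φ (θ ∘ π))]
      exact hφ.2 _
    simp only [this, Finset.sum_const, Finset.card_univ, nsmul_eq_mul, mul_one]
    exact div_self (ne_of_gt cardPerm_pos)

lemma sym_IC {q ρ : Fin m → ℝ} {φ : (Fin n → Fin m) → Fin n → ℝ} (hφ : IC q ρ φ) :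
    IC q ρ (sym φ) := by
  rw [IC_iff]
  intro i j
  rw [mom_sym, mom_sym]
  gcongr with π hπ
  exact hφ _ _

lemma sym_senderUtil (q ξ : Fin m → ℝ) (φ : (Fin n → Fin m) → Fin n → ℝ) :
    senderUtil q ξ (sym φ) = senderUtil q ξ φ := by
  rw [senderUtil_eq, senderUtil_eq]
  simp only [mom_sym]
  rw [← Finset.sum_div, Finset.sum_comm]
  have : ∀ π : Equiv.Perm (Fin n), ∑ i, mom q φ (π⁻¹ i) (π⁻¹ i) ξ = ∑ i, mom q φ i i ξ := by
    intro π
    exact Equiv.sum_comp (π⁻¹ : Equiv.Perm (Fin n)) (fun l => mom q φ l l ξ)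
  simp only [this, Finset.sum_const, Finset.card_univ, nsmul_eq_mul]
  exact mul_div_cancel_left₀ _ (ne_of_gt cardPerm_pos)

lemma mom_continuous (q : Fin m → ℝ) (i j : Fin n) (F : Fin m → ℝ) :
    Continuous fun φ : (Fin n → Fin m) → Fin n → ℝ => mom q φ i j F := by
  unfold mom
  refine continuous_finset_sum _ fun θ _ => ?_
  have : Continuous fun φ : (Fin n → Fin m) → Fin n → ℝ => φ θ i :=
    (continuous_apply i).comp (continuous_apply θ)
  exact (continuous_const.mul this).mul continuous_const

end IIDProof

open IIDProof

theorem symmetric_optimal_scheme_exists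
    {n m : ℕ} (hn : 0 < n)
    (q ξ ρ : Fin m → ℝ) (hq0 : ∀ k, 0 ≤ q k) (hq1 : ∑ k, q k = 1) :
    ∃ φ : (Fin n → Fin m) → Fin n → ℝ,
      IsScheme φ ∧ IC q ρ φ ∧
      (∀ ψ : (Fin n → Fin m) → Fin n → ℝ,
        IsScheme ψ → IC q ρ ψ → senderUtil q ξ ψ ≤ senderUtil q ξ φ) ∧
      ∃ x y : Fin m → ℝ,
        (∀ i k, signature q φ i i k = x k) ∧
        ∀ i j, j ≠ i → ∀ k, signature q φ i j k = y k := by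
  classical
  have hc : ∀ (θ : Fin n → Fin m) (i : Fin n),
      Continuous fun φ : (Fin n → Fin m) → Fin n → ℝ => φ θ i :=
    fun θ i => (continuous_apply i).comp (continuous_apply θ)
  set S : Set ((Fin n → Fin m) → Fin n → ℝ) := {φ | IsScheme φ ∧ IC q ρ φ} with hSdef
  -- S is closed
  have hclosed : IsClosed S := by
    have h1 : IsClosed {φ : (Fin n → Fin m) → Fin n → ℝ | IsScheme φ} := by
      have he : {φ : (Fin n → Fin m) → Fin n → ℝ | IsScheme φ} =
          (⋂ θ, ⋂ i, {φ | 0 ≤ φ θ i}) ∩ (⋂ θ, {φ | ∑ i, φ θ i = 1}) := by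
        ext φ
        simp [IsScheme, Set.mem_iInter]
      rw [he]
      exact (isClosed_iInter fun θ => isClosed_iInter fun i =>
          isClosed_le continuous_const (hc θ i)).inter
        (isClosed_iInter fun θ =>
          isClosed_eq (continuous_finset_sum _ fun i _ => hc θ i) continuous_const)
    have h2 : IsClosed {φ : (Fin n → Fin m) → Fin n → ℝ | IC q ρ φ} := by
      have he : {φ : (Fin n → Fin m) → Fin n → ℝ | IC q ρ φ} =
          ⋂ i, ⋂ j, {φ | mom q φ i j ρ ≤ mom q φ i i ρ} := by
        ext φ
        simp only [Set.mem_setOf_eq, Set.mem_iInter]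
        exact Iff.rfl
      rw [he]
      exact isClosed_iInter fun i => isClosed_iInter fun j =>
        isClosed_le (mom_continuous q i j ρ) (mom_continuous q i i ρ)
    have hSe : S = {φ : (Fin n → Fin m) → Fin n → ℝ | IsScheme φ} ∩
        {φ | IC q ρ φ} := rfl
    rw [hSe]
    exact h1.inter h2
  -- S is contained in a compact box
  have hsub : S ⊆ Set.Icc (0 : (Fin n → Fin m) → Fin n → ℝ) 1 := by
    intro φ hφ
    obtain ⟨⟨hpos, hsum⟩, _⟩ := hφ
    constructor
    · intro θ
      intro i
      exact hpos θ i
    · intro θ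
      intro i
      calc φ θ i ≤ ∑ j, φ θ j :=
            Finset.single_le_sum (fun j _ => hpos θ j) (Finset.mem_univ i)
        _ = 1 := hsum θ
  have hcpt : IsCompact S := (isCompact_Icc).of_isClosed_subset hclosed hsub
  -- S is nonempty: the uniform scheme
  have hunif : (fun (_ : Fin n → Fin m) (_ : Fin n) => (n : ℝ)⁻¹) ∈ S := by
    have hn' : (n : ℝ) ≠ 0 := by positivity
    refine ⟨⟨fun θ i => by positivity, fun θ => ?_⟩, ?_⟩
    · simp [Finset.sum_const, Finset.card_univ, nsmul_eq_mul]
      exact mul_inv_cancel₀ hn'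
    · intro i j
      apply le_of_eq
      have h := sum_comp_perm (Equiv.swap i j)
        (fun θ => prior q θ * (n : ℝ)⁻¹ * ρ (θ i))
      calc ∑ θ : Fin n → Fin m, prior q θ * (n : ℝ)⁻¹ * ρ (θ j)
          = ∑ θ : Fin n → Fin m,
              prior q (θ ∘ Equiv.swap i j) * (n : ℝ)⁻¹ * ρ ((θ ∘ Equiv.swap i j) i) := by
            refine Finset.sum_congr rfl fun θ _ => ?_
            rw [prior_comp]
            simp [Equiv.swap_apply_left]
        _ = ∑ θ : Fin n → Fin m, prior q θ * (n : ℝ)⁻¹ * ρ (θ i) := h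
  -- maximize sender utility over S
  have hcont : Continuous fun φ : (Fin n → Fin m) → Fin n → ℝ => senderUtil q ξ φ := by
    unfold senderUtil
    exact continuous_finset_sum _ fun θ _ => continuous_finset_sum _ fun i _ =>
      (continuous_const.mul (hc θ i)).mul continuous_const
  obtain ⟨φ₀, hφ₀S, hmax⟩ := hcpt.exists_isMaxOn ⟨_, hunif⟩ hcont.continuousOn
  obtain ⟨hφ₀sch, hφ₀IC⟩ := hφ₀S
  refine ⟨sym φ₀, sym_isScheme hφ₀sch, sym_IC hφ₀IC, ?_, ?_⟩
  · intro ψ hψ1 hψ2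
    calc senderUtil q ξ ψ ≤ senderUtil q ξ φ₀ := hmax ⟨hψ1, hψ2⟩
      _ = senderUtil q ξ (sym φ₀) := (sym_senderUtil q ξ φ₀).symm
  · set i₀ : Fin n := ⟨0, hn⟩ with hi₀
    have hdiag : ∀ i k, signature q (sym φ₀) i i k = signature q (sym φ₀) i₀ i₀ k := by
      intro i k
      rw [signature_eq, signature_eq, mom_sym, mom_sym]
      congr 1
      exact perm_sum_diag (fun l => mom q φ₀ l l (fun l' => if l' = k then 1 else 0)) i i₀
    have hoff : ∀ i j, j ≠ i → ∀ i' j', j' ≠ i' → ∀ k,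
        signature q (sym φ₀) i j k = signature q (sym φ₀) i' j' k := by
      intro i j hji i' j' hji' k
      rw [signature_eq, signature_eq, mom_sym, mom_sym]
      congr 1
      exact perm_sum_pair (fun a b => mom q φ₀ a b (fun l' => if l' = k then 1 else 0))
        hji hji'
    by_cases h2 : ∃ p : Fin n × Fin n, p.2 ≠ p.1
    · obtain ⟨⟨a, b⟩, hab⟩ := h2
      exact ⟨fun k => signature q (sym φ₀) i₀ i₀ k, fun k => signature q (sym φ₀) a b k,
        fun i k => hdiag i k, fun i j hji k => hoff i j hji a b hab k⟩
    · push_neg at h2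
      exact ⟨fun k => signature q (sym φ₀) i₀ i₀ k, 0,
        fun i k => hdiag i k, fun i j hji k => absurd (h2 (i, j)) hji⟩
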